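/- Let n ∈ ℕ with n ≥ 2, let 1 ≤ k ≤ n, and let p* ∈ [0,1] be a maximizer of ψ_{n,k} on [0,1]. Then for every u ∈ [0,1], the supremum sup_{p ∈ [u,1]} ψ_{n,k}(p) is attained at max(p*, u); that is, f_{n,k}(u) = u · ψ_{n,k}(max(p*, u)). In particular f_{n,k}(u) = B_{n,u}({k,…,n}) for u ∈ [p*, 1]. -/

import Mathlib

open MeasureTheory

/-- Binomial upper tail `B_{n,p}({k,…,n})`. -/
noncomputable def binTail (n k : ℕ) (p : ℝ) : ℝ :=
  ∑ j ∈ Finset.Icc k n, (n.choose j : ℝ) * p ^ j * (1 - p) ^ (n - j)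

/-- `ψ_{n,k}(p) = p⁻¹ B_{n,p}({k,…,n})`, extended continuously at `0`. -/
noncomputable def psi (n k : ℕ) (p : ℝ) : ℝ :=
  if p = 0 then (if k = 1 then (n : ℝ) else 0) else p⁻¹ * binTail n k p

/-- `c_{n,k} = sup_{p ∈ [0,1]} ψ_{n,k}(p)`. -/
noncomputable def cnk (n k : ℕ) : ℝ := sSup (psi n k '' Set.Icc 0 1)

/-- `f_{n,k}(u) = u ⋅ sup_{p ∈ [u,1]} ψ_{n,k}(p)`. -/
noncomputable def fnk (n k : ℕ) (u : ℝ) : ℝ := u * sSup (psi n k '' Set.Icc u 1)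
open Finset

private lemma binTail_continuous (n k : ℕ) : Continuous (binTail n k) := by
  unfold binTail
  exact continuous_finset_sum _ fun j _ =>
    (continuous_const.mul (continuous_pow j)).mul ((continuous_const.sub continuous_id).pow _)

private lemma psi_of_ne (n k : ℕ) {p : ℝ} (hp : p ≠ 0) :
    psi n k p = p⁻¹ * binTail n k p := if_neg hp

private lemma binTail_hasDerivAt (n k : ℕ) (hk1 : 1 ≤ k) (p : ℝ) :
    HasDerivAt (binTail n k) ((k : ℝ) * n.choose k * p ^ (k-1) * (1-p) ^ (n-k)) p := by
  set a : ℕ → ℝ := fun j => (j : ℝ) * n.choose j * p ^ (j-1) * (1-p) ^ (n-j) with ha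
  have key : HasDerivAt (binTail n k) (∑ j ∈ Icc k n, (a j - a (j+1))) p := by
    unfold binTail
    apply HasDerivAt.fun_sum
    intro j hj
    have hj1 : 1 ≤ j := le_trans hk1 (mem_Icc.mp hj).1
    have h2 : HasDerivAt (fun x : ℝ => (1 - x) ^ (n - j))
        (((n-j : ℕ) : ℝ) * (1-p)^(n-j-1) * (-1)) p :=
      (hasDerivAt_pow (n-j) (1-p)).comp p ((hasDerivAt_id p).const_sub 1)
    have h3 := ((hasDerivAt_pow j p).fun_mul h2).const_mul ((n.choose j : ℝ))
    have hfun : (fun x : ℝ => (n.choose j : ℝ) * (x ^ j * (1 - x) ^ (n - j)))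
        = fun x : ℝ => (n.choose j : ℝ) * x ^ j * (1 - x) ^ (n - j) := by
      funext x; ring
    rw [hfun] at h3
    refine h3.congr_deriv (Eq.symm ?_)
    have hcast : ((j+1 : ℕ) : ℝ) * (n.choose (j+1) : ℝ) = (n.choose j : ℝ) * ((n - j : ℕ) : ℝ) := by
      push_cast [← Nat.cast_mul]
      exact_mod_cast (mul_comm (n.choose (j+1)) (j+1)) ▸ Nat.choose_succ_right_eq n j
    simp only [ha]
    have e1 : (j + 1) - 1 = j := by omega
    have e2 : n - (j + 1) = n - j - 1 := by omega
    rw [e1, e2]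
    push_cast at hcast ⊢
    linear_combination (-(p ^ j * (1 - p) ^ (n - j - 1))) * hcast
  have htel : ∑ j ∈ Icc k n, (a j - a (j+1)) = a k := by
    rcases le_or_gt k n with hkn | hkn
    · rw [← Finset.Ico_add_one_right_eq_Icc, Finset.sum_Ico_eq_sum_range]
      have hc : ∀ i ∈ Finset.range (n + 1 - k), a (k + i) - a (k + i + 1)
          = (fun i => a (k + i)) i - (fun i => a (k + i)) (i+1) := by
        intro i _; simp [Nat.add_assoc]
      rw [Finset.sum_congr rfl hc, Finset.sum_range_sub']
      have h0 : a (k + (n + 1 - k)) = 0 := by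
        have he : k + (n+1-k) = n+1 := by omega
        rw [he]
        simp [ha, Nat.choose_succ_self]
      rw [h0, sub_zero]; simp
    · rw [Finset.Icc_eq_empty (by omega), Finset.sum_empty]
      simp [ha, Nat.choose_eq_zero_of_lt hkn]
  rw [htel] at key
  simpa [ha, mul_assoc] using key

noncomputable def Hf (n k : ℕ) (p : ℝ) : ℝ :=
  (k:ℝ) * n.choose k * p ^ k * (1-p) ^ (n-k) - binTail n k p

noncomputable def Gf (n k : ℕ) (p : ℝ) : ℝ :=
  ((k:ℝ) - 1) * n.choose k - ∑ j ∈ Icc (k+1) n, (n.choose j : ℝ) * (p/(1-p)) ^ (j-k)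

private lemma psi_hasDerivAt (n k : ℕ) (hk1 : 1 ≤ k) {p : ℝ} (hp : p ≠ 0) :
    HasDerivAt (psi n k) (Hf n k p / p^2) p := by
  have hB := binTail_hasDerivAt n k hk1 p
  have h := (hasDerivAt_inv hp).mul hB
  have heq : psi n k =ᶠ[nhds p] fun x => x⁻¹ * binTail n k x := by
    filter_upwards [eventually_ne_nhds hp] with x hx
    exact psi_of_ne n k hx
  have h2 := h.congr_of_eventuallyEq heq
  refine h2.congr_deriv ?_
  have hpk : p ^ k = p ^ (k-1) * p := by
    rw [← pow_succ]; congr 1; omega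
  unfold Hf
  rw [hpk]
  field_simp
  ring

private lemma Hf_eq (n k : ℕ) (hkn : k ≤ n) {p : ℝ} (hp0 : 0 < p) (hp1 : p < 1) :
    Hf n k p = p ^ k * (1-p) ^ (n-k) * Gf n k p := by
  have h1p : (0:ℝ) < 1 - p := by linarith
  have hins : Finset.Icc k n = insert k (Finset.Icc (k+1) n) := by
    ext j; simp [Finset.mem_Icc, Finset.mem_insert]; omega
  have hsplit : binTail n k p = (n.choose k : ℝ) * p ^ k * (1-p)^(n-k)
      + ∑ j ∈ Icc (k+1) n, (n.choose j:ℝ)*p^j*(1-p)^(n-j) := by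
    unfold binTail
    rw [hins, Finset.sum_insert (by simp)]
  have hterm : ∀ j ∈ Icc (k+1) n,
      p^k*(1-p)^(n-k) * ((n.choose j:ℝ) * (p/(1-p))^(j-k)) = (n.choose j:ℝ)*p^j*(1-p)^(n-j) := by
    intro j hj
    obtain ⟨hj1, hj2⟩ := mem_Icc.mp hj
    have e1 : p ^ k * p ^ (j-k) = p ^ j := by rw [← pow_add]; congr 1; omega
    have e2 : (1-p) ^ (n-j) * (1-p)^(j-k) = (1-p)^(n-k) := by rw [← pow_add]; congr 1; omega
    rw [div_pow]
    field_simp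
    rw [← e1, ← e2]
    ring
  unfold Hf Gf
  rw [hsplit, mul_sub, Finset.mul_sum, Finset.sum_congr rfl hterm]
  ring

private lemma Gf_anti (n k : ℕ) {p q : ℝ} (hp : 0 < p) (hpq : p ≤ q) (hq : q < 1) :
    Gf n k q ≤ Gf n k p := by
  unfold Gf
  have h1q : (0:ℝ) < 1 - q := by linarith
  have hr : p / (1-p) ≤ q / (1-q) :=
    div_le_div₀ (le_of_lt (lt_of_lt_of_le hp hpq)) hpq h1q (by linarith)
  have hs : ∀ j ∈ Icc (k+1) n,
      (n.choose j:ℝ) * (p/(1-p))^(j-k) ≤ (n.choose j:ℝ)*(q/(1-q))^(j-k) := by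
    intro j _
    have h1p : (0:ℝ) < 1 - p := by linarith
    have hnn : 0 ≤ p / (1-p) := div_nonneg hp.le h1p.le
    exact mul_le_mul_of_nonneg_left (pow_le_pow_left₀ hnn hr _) (Nat.cast_nonneg _)
  have := Finset.sum_le_sum hs
  linarith

private lemma Hf_pos_of (n k : ℕ) (hkn : k ≤ n) {p q : ℝ} (hp : 0 < p) (hpq : p ≤ q)
    (hq : q < 1) (hHq : 0 < Hf n k q) : 0 < Hf n k p := by
  have hq0 : 0 < q := lt_of_lt_of_le hp hpq
  have hp1 : p < 1 := lt_of_le_of_lt hpq hq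
  rw [Hf_eq n k hkn hq0 hq] at hHq
  have hposq : (0:ℝ) < q^k * (1-q)^(n-k) := by
    have : (0:ℝ) < 1 - q := by linarith
    positivity
  have hGq : 0 < Gf n k q := by
    by_contra h
    push_neg at h
    nlinarith
  have hGp : 0 < Gf n k p := lt_of_lt_of_le hGq (Gf_anti n k hp hpq hq)
  rw [Hf_eq n k hkn hp hp1]
  have h1p : (0:ℝ) < 1 - p := by linarith
  positivity

private lemma Gf_nonpos_k1 (n : ℕ) {q : ℝ} (hq0 : 0 < q) (hq1 : q < 1) : Gf n 1 q ≤ 0 := by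
  unfold Gf
  have h1q : (0:ℝ) < 1 - q := by linarith
  have hsum : 0 ≤ ∑ j ∈ Icc (1+1) n, (n.choose j:ℝ)*(q/(1-q))^(j-1) :=
    Finset.sum_nonneg fun j _ =>
      mul_nonneg (Nat.cast_nonneg _) (pow_nonneg (div_nonneg hq0.le h1q.le) _)
  simp only [Nat.cast_one, sub_self, zero_mul, zero_sub, neg_nonpos]
  exact hsum

private lemma binTail_pos (n k : ℕ) (hkn : k ≤ n) {q : ℝ} (hq0 : 0 < q) (hq1 : q < 1) :
    0 < binTail n k q := by
  have h1q : (0:ℝ) < 1 - q := by linarith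
  unfold binTail
  apply Finset.sum_pos'
  · intro j _
    positivity
  · refine ⟨k, Finset.mem_Icc.mpr ⟨le_refl k, hkn⟩, ?_⟩
    have := Nat.choose_pos hkn
    positivity

private lemma psi_contOn (n k : ℕ) {a b : ℝ} (ha : 0 < a) :
    ContinuousOn (psi n k) (Set.Icc a b) := by
  apply ContinuousOn.congr (f := fun x : ℝ => x⁻¹ * binTail n k x)
  · exact ContinuousOn.mul
      (ContinuousOn.inv₀ continuousOn_id fun x hx => ne_of_gt (lt_of_lt_of_le ha hx.1))
      (binTail_continuous n k).continuousOn
  · intro x hx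
    exact psi_of_ne n k (ne_of_gt (lt_of_lt_of_le ha hx.1))

private lemma psi_le_on_right (n k : ℕ) (hk1 : 1 ≤ k) (hkn : k ≤ n)
    (pstar : ℝ) (hpstar : pstar ∈ Set.Icc (0:ℝ) 1)
    (hmax : ∀ p ∈ Set.Icc (0:ℝ) 1, psi n k p ≤ psi n k pstar)
    {u : ℝ} (hu0 : 0 < u) (hup : pstar ≤ u) (hu1 : u ≤ 1) :
    ∀ p ∈ Set.Icc u 1, psi n k p ≤ psi n k u := by
  have hHle : ∀ q ∈ Set.Ioo u 1, Hf n k q ≤ 0 := by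
    intro q hq
    by_contra hpos
    push_neg at hpos
    have hq0 : 0 < q := lt_trans hu0 hq.1
    have hq1 : q < 1 := hq.2
    have hGq : 0 < Gf n k q := by
      have he := Hf_eq n k hkn hq0 hq1
      rw [he] at hpos
      have h1q : (0:ℝ) < 1 - q := by linarith
      have hA : (0:ℝ) < q^k*(1-q)^(n-k) := by positivity
      by_contra h
      push_neg at h
      nlinarith
    rcases eq_or_lt_of_le hk1 with hk | hk2
    · exact absurd hGq (not_lt.mpr (by rw [← hk]; exact Gf_nonpos_k1 n hq0 hq1))
    · rcases eq_or_lt_of_le hpstar.1 with hps0 | hps0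
      · have h1 : psi n k pstar = 0 := by
          rw [← hps0]; unfold psi; rw [if_pos rfl, if_neg (by omega)]
        have h2 : 0 < psi n k q := by
          rw [psi_of_ne n k (ne_of_gt hq0)]
          exact mul_pos (inv_pos.mpr hq0) (binTail_pos n k hkn hq0 hq1)
        have := hmax q ⟨le_of_lt hq0, le_of_lt hq1⟩
        linarith
      · have hps_lt_q : pstar < q := lt_of_le_of_lt hup hq.1
        have hmono : StrictMonoOn (psi n k) (Set.Icc pstar q) := by
          apply strictMonoOn_of_deriv_pos (convex_Icc _ _) (psi_contOn n k hps0)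
          intro x hx
          rw [interior_Icc] at hx
          have hx0 : 0 < x := lt_trans hps0 hx.1
          have hHx : 0 < Hf n k x := Hf_pos_of n k hkn hx0 (le_of_lt hx.2) hq1 hpos
          rw [(psi_hasDerivAt n k hk1 (ne_of_gt hx0)).deriv]
          positivity
        have hlt := hmono (Set.mem_Icc.mpr ⟨le_refl _, le_of_lt hps_lt_q⟩)
          (Set.mem_Icc.mpr ⟨le_of_lt hps_lt_q, le_refl _⟩) hps_lt_q
        have := hmax q ⟨le_of_lt hq0, le_of_lt hq1⟩
        linarith
  have hanti : AntitoneOn (psi n k) (Set.Icc u 1) := by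
    apply antitoneOn_of_deriv_nonpos (convex_Icc _ _) (psi_contOn n k hu0)
    · intro x hx
      rw [interior_Icc] at hx
      exact ((psi_hasDerivAt n k hk1 (ne_of_gt (lt_trans hu0 hx.1))).differentiableAt).differentiableWithinAt
    · intro x hx
      rw [interior_Icc] at hx
      have hx0 : 0 < x := lt_trans hu0 hx.1
      rw [(psi_hasDerivAt n k hk1 (ne_of_gt hx0)).deriv]
      exact div_nonpos_of_nonpos_of_nonneg (hHle x hx) (sq_nonneg x)
  intro p hp
  exact hanti (Set.mem_Icc.mpr ⟨le_refl u, hu1⟩) hp hp.1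

/-- For `n ≥ 2` and any maximizer `p*` of `ψ_{n,k}` on `[0,1]`, the supremum
`sup_{p ∈ [u,1]} ψ_{n,k}(p)` is attained at `max(p*,u)`, so that
`f_{n,k}(u) = u ⋅ ψ_{n,k}(max(p*,u))`; in particular `f_{n,k}(u) = B_{n,u}({k,…,n})`
for `u ∈ [p*,1]`. -/
theorem fnk_eq_repr (n k : ℕ) (hn : 2 ≤ n) (hk1 : 1 ≤ k) (hkn : k ≤ n)
    (pstar : ℝ) (hpstar : pstar ∈ Set.Icc (0:ℝ) 1)
    (hmax : ∀ p ∈ Set.Icc (0:ℝ) 1, psi n k p ≤ psi n k pstar) :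
    (∀ u ∈ Set.Icc (0:ℝ) 1,
      IsGreatest (psi n k '' Set.Icc u 1) (psi n k (max pstar u)) ∧
      fnk n k u = u * psi n k (max pstar u)) ∧
    (∀ u ∈ Set.Icc pstar 1, fnk n k u = binTail n k u) := by
  have main : ∀ u ∈ Set.Icc (0:ℝ) 1,
      IsGreatest (psi n k '' Set.Icc u 1) (psi n k (max pstar u)) ∧
      fnk n k u = u * psi n k (max pstar u) := by
    intro u hu
    have hmem : max pstar u ∈ Set.Icc u 1 :=
      Set.mem_Icc.mpr ⟨le_max_right _ _, max_le hpstar.2 hu.2⟩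
    have hub : ∀ p ∈ Set.Icc u 1, psi n k p ≤ psi n k (max pstar u) := by
      intro p hp
      rcases le_or_gt u pstar with h | h
      · rw [max_eq_left h]
        exact hmax p ⟨le_trans hu.1 hp.1, hp.2⟩
      · rw [max_eq_right (le_of_lt h)]
        have hu0 : 0 < u := lt_of_le_of_lt hpstar.1 h
        exact psi_le_on_right n k hk1 hkn pstar hpstar hmax hu0 (le_of_lt h) hu.2 p hp
    have hG : IsGreatest (psi n k '' Set.Icc u 1) (psi n k (max pstar u)) :=
      ⟨Set.mem_image_of_mem _ hmem, by rintro y ⟨p, hp, rfl⟩; exact hub p hp⟩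
    exact ⟨hG, by unfold fnk; rw [hG.csSup_eq]⟩
  refine ⟨main, ?_⟩
  intro u hu
  have hu01 : u ∈ Set.Icc (0:ℝ) 1 := ⟨le_trans hpstar.1 hu.1, hu.2⟩
  have h2 := (main u hu01).2
  rw [max_eq_right hu.1] at h2
  rw [h2]
  rcases eq_or_lt_of_le hu01.1 with h0 | h0
  · have hb : binTail n k 0 = 0 := by
      unfold binTail
      apply Finset.sum_eq_zero
      intro j hj
      have hj0 : j ≠ 0 := by have := (Finset.mem_Icc.mp hj).1; omega
      simp [zero_pow hj0]
    rw [← h0, hb]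
    ring
  · rw [psi_of_ne n k (ne_of_gt h0), ← mul_assoc, mul_inv_cancel₀ (ne_of_gt h0), one_mul]
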